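/- Let ℓ ≥ 1 and set n = (ℓ+1)(3ℓ+4)/2, m = ℓ(3ℓ+1)/2. Let B be diagonal with n copies of 1/2 and m copies of -1/2. Then T_2(B) is diagonal with value ℓ(3ℓ+1)/4 on the first block and value (ℓ+1)(3ℓ+4)/4 on the second block; in particular T_2(B) is positive definite. -/

import Mathlib

open Matrix

/-- `σ_k` of a diagonal matrix: the `k`-th elementary symmetric function of its
diagonal entries (= its eigenvalues). -/
noncomputable def sigmaDiag {d : ℕ} (v : Fin d → ℝ) (k : ℕ) : ℝ :=
  (Finset.univ.val.map v).esymm k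

/-- The second Newton tensor `T_2(B) = σ_2(B)·Id − σ_1(B)·B + B²` of a diagonal matrix. -/
noncomputable def newtonTwo {d : ℕ} (v : Fin d → ℝ) : Matrix (Fin d) (Fin d) ℝ :=
  (sigmaDiag v 2) • (1 : Matrix (Fin d) (Fin d) ℝ)
    - (sigmaDiag v 1) • Matrix.diagonal v + (Matrix.diagonal v) ^ 2

lemma esymm_cons_aux (a : ℝ) (s : Multiset ℝ) (k : ℕ) :
    (a ::ₘ s).esymm (k + 1) = a * s.esymm k + s.esymm (k + 1) := by
  simp only [Multiset.esymm, Multiset.powersetCard_cons, Multiset.map_add, Multiset.sum_add,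
    Multiset.map_map, Function.comp]
  rw [add_comm]
  congr 1
  rw [← Multiset.sum_map_mul_left]
  congr 1
  exact Multiset.map_congr rfl fun t _ => by rw [Multiset.prod_cons]

lemma esymm_one' (s : Multiset ℝ) : s.esymm 1 = s.sum := by
  simp [Multiset.esymm, Multiset.powersetCard_one, Multiset.map_map, Function.comp]

lemma esymm_two (s : Multiset ℝ) :
    s.esymm 2 = (s.sum ^ 2 - (s.map (fun x => x ^ 2)).sum) / 2 := by
  induction s using Multiset.induction with
  | empty => simp [Multiset.esymm, Multiset.powersetCard_zero_right]
  | cons a s ih =>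
    rw [show (2 : ℕ) = 1 + 1 from rfl, esymm_cons_aux, esymm_one', ih,
      Multiset.sum_cons, Multiset.map_cons, Multiset.sum_cons]
    ring

theorem newton_two_schouten_case3 (ℓ : ℕ) (hℓ : 1 ≤ ℓ)
    (n m : ℕ) (hn : n = (ℓ + 1) * (3 * ℓ + 4) / 2) (hm : m = ℓ * (3 * ℓ + 1) / 2)
    (v : Fin (n + m) → ℝ)
    (hv : v = fun i : Fin (n + m) => if (i : ℕ) < n then (1 : ℝ) / 2 else -(1 : ℝ) / 2) :
    newtonTwo v =
      Matrix.diagonal (fun i : Fin (n + m) =>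
        if (i : ℕ) < n then (ℓ : ℝ) * (3 * ℓ + 1) / 4 else ((ℓ : ℝ) + 1) * (3 * ℓ + 4) / 4) ∧
    (newtonTwo v).PosDef := by
  -- real values of n and m
  have h2n : 2 * n = (ℓ + 1) * (3 * ℓ + 4) := by
    rw [hn, Nat.mul_div_cancel']
    rcases Nat.even_or_odd ℓ with ⟨k, hk⟩ | ⟨k, hk⟩ <;> subst hk
    · exact ⟨(2 * k + 1) * (3 * k + 2), by ring⟩
    · exact ⟨(k + 1) * (6 * k + 7), by ring⟩
  have h2m : 2 * m = ℓ * (3 * ℓ + 1) := by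
    rw [hm, Nat.mul_div_cancel']
    rcases Nat.even_or_odd ℓ with ⟨k, hk⟩ | ⟨k, hk⟩ <;> subst hk
    · exact ⟨k * (6 * k + 1), by ring⟩
    · exact ⟨(2 * k + 1) * (3 * k + 2), by ring⟩
  set L : ℝ := (ℓ : ℝ) with hL
  have hL1 : (1 : ℝ) ≤ L := by rw [hL]; exact_mod_cast hℓ
  have hN : (n : ℝ) = (L + 1) * (3 * L + 4) / 2 := by
    have := congrArg (fun x : ℕ => (x : ℝ)) h2n
    push_cast at this
    linarith
  have hM : (m : ℝ) = L * (3 * L + 1) / 2 := by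
    have := congrArg (fun x : ℕ => (x : ℝ)) h2m
    push_cast at this
    linarith
  -- sum of entries and sum of squares
  have hsplit : ∀ f : ℕ → ℝ, ∑ i : Fin (n + m), f (i : ℕ) =
      (∑ i ∈ Finset.range n, f i) + ∑ i ∈ Finset.Ico n (n + m), f i := by
    intro f
    rw [Fin.sum_univ_eq_sum_range, Finset.range_eq_Ico, Finset.range_eq_Ico]
    exact (Finset.sum_Ico_consecutive f (Nat.zero_le n) (Nat.le_add_right n m)).symm
  have hsum : ∑ i : Fin (n + m), v i = ((n : ℝ) - m) / 2 := by
    rw [hv]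
    simp only
    rw [hsplit (fun i => if i < n then (1 : ℝ) / 2 else -(1 : ℝ) / 2)]
    rw [Finset.sum_congr rfl (fun i hi => if_pos (Finset.mem_range.mp hi)),
      Finset.sum_congr rfl (fun i hi => if_neg (by
        have := (Finset.mem_Ico.mp hi).1; omega)),
      Finset.sum_const, Finset.sum_const]
    simp [Nat.card_Ico]
    ring
  have hsumsq : ∑ i : Fin (n + m), (v i) ^ 2 = ((n : ℝ) + m) / 4 := by
    rw [hv]
    simp only
    have : ∀ i : ℕ, (if i < n then (1 : ℝ) / 2 else -(1 : ℝ) / 2) ^ 2 = 1 / 4 := by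
      intro i; split <;> norm_num
    calc ∑ i : Fin (n + m), (if (i : ℕ) < n then (1 : ℝ) / 2 else -(1 : ℝ) / 2) ^ 2
        = ∑ _i : Fin (n + m), (1 : ℝ) / 4 := Finset.sum_congr rfl fun i _ => this i
      _ = ((n : ℝ) + m) / 4 := by
          rw [Finset.sum_const]
          simp
          ring
  -- the two symmetric functions
  have hmsum : (Finset.univ.val.map v).sum = ∑ i : Fin (n + m), v i := rfl
  have hmsumsq : ((Finset.univ.val.map v).map (fun x => x ^ 2)).sum
      = ∑ i : Fin (n + m), (v i) ^ 2 := by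
    rw [Multiset.map_map]; rfl
  have hs1 : sigmaDiag v 1 = (3 * L + 2) / 2 := by
    rw [sigmaDiag, esymm_one', hmsum, hsum, hN, hM]; ring
  have hs2 : sigmaDiag v 2 = (3 * L + 1) * (L + 1) / 4 := by
    rw [sigmaDiag, esymm_two, hmsum, hmsumsq, hsum, hsumsq, hN, hM]; ring
  -- diagonal form
  have hdiag : newtonTwo v =
      Matrix.diagonal (fun i : Fin (n + m) =>
        if (i : ℕ) < n then L * (3 * L + 1) / 4 else (L + 1) * (3 * L + 4) / 4) := by
    rw [newtonTwo, hs1, hs2, Matrix.diagonal_pow, ← Matrix.diagonal_one,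
      ← Matrix.diagonal_smul, ← Matrix.diagonal_smul, Matrix.diagonal_sub, Matrix.diagonal_add]
    refine congrArg Matrix.diagonal (funext fun i => ?_)
    simp only [Pi.add_apply, Pi.sub_apply, Pi.smul_apply, Pi.pow_apply, Pi.one_apply,
      smul_eq_mul, hv]
    split <;> ring
  refine ⟨hdiag, ?_⟩
  rw [hdiag]
  rw [Matrix.posDef_diagonal_iff]
  intro i
  split <;> nlinarith [hL1]
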